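/- arXiv:1411.4718 — 6 statements merged into one kernel-verified Lean document; each statement's English description precedes it below -/
import Mathlib

section
/- For all real numbers t, φ₀, β, the product of matrix exponentials exp(t(cos φ₀ · p₁ + sin φ₀ · p₂ + β·k)) · exp(−tβ·k) equals the 2×2 complex matrix [[A, B],[−conj(B), conj(A)]], where Re(A) = (β/√(1+β²))·sin(t√(1+β²)/2)·sin(βt/2) + cos(t√(1+β²)/2)·cos(βt/2), Im(A) = (β/√(1+β²))·sin(t√(1+β²)/2)·cos(βt/2) − cos(t√(1+β²)/2)·sin(βt/2), and B = (sin(t√(1+β²)/2)/√(1+β²))·(cos(βt/2 + φ₀) + i·sin(βt/2 + φ₀)). -/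
open Real Matrix

/-- The basis elements of `su(2)`. -/
noncomputable def p₁ : Matrix (Fin 2) (Fin 2) ℂ := (1/2 : ℂ) • !![0, 1; -1, 0]
noncomputable def p₂ : Matrix (Fin 2) (Fin 2) ℂ := (1/2 : ℂ) • !![0, Complex.I; Complex.I, 0]
noncomputable def k : Matrix (Fin 2) (Fin 2) ℂ := (1/2 : ℂ) • !![Complex.I, 0; 0, -Complex.I]

/-- Exponential of a real multiple of a complex 2×2 matrix squaring to `-1`. -/
theorem exp_smul_sq_neg_one (N : Matrix (Fin 2) (Fin 2) ℂ) (hN : N * N = -1) (ω : ℝ) :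
    NormedSpace.exp ((ω:ℂ) • N) =
      (Real.cos ω : ℂ) • (1 : Matrix (Fin 2) (Fin 2) ℂ) + (Real.sin ω : ℂ) • N := by
  open NormedSpace in
  letI : SeminormedRing (Matrix (Fin 2) (Fin 2) ℂ) := Matrix.linftyOpSemiNormedRing
  letI : NormedRing (Matrix (Fin 2) (Fin 2) ℂ) := Matrix.linftyOpNormedRing
  letI : NormedAlgebra ℝ (Matrix (Fin 2) (Fin 2) ℂ) := Matrix.linftyOpNormedAlgebra
  let f := Complex.lift ⟨N, hN⟩
  have hc : Continuous f := f.toLinearMap.continuous_of_finiteDimensional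
  have hf : ∀ z : ℂ, f z = (z.re : ℂ) • 1 + (z.im : ℂ) • N := by
    intro z
    show Complex.liftAux N hN z = _
    rw [Complex.liftAux_apply]
    simp [Algebra.algebraMap_eq_smul_one, Complex.coe_smul]
  have h1 : (ω:ℂ) • N = f ((ω:ℂ) * Complex.I) := by rw [hf]; simp
  have h2 : NormedSpace.exp ((ω:ℂ) * Complex.I) = Complex.exp ((ω:ℂ) * Complex.I) := by
    rw [Complex.exp_eq_exp_ℂ]
  have h3 := map_exp f.toRingHom hc ((ω:ℂ) * Complex.I)
  rw [h1]
  refine (show NormedSpace.exp (f ((ω:ℂ) * Complex.I)) = f (NormedSpace.exp ((ω:ℂ) * Complex.I)) from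
    h3.symm).trans ?_
  rw [h2, hf]
  simp [Complex.exp_mul_I]

set_option maxHeartbeats 1600000 in
/-- The explicit entries of the sub-Riemannian geodesic
`γ(t) = exp(t(cos φ₀ p₁ + sin φ₀ p₂ + β k)) · exp(−tβ k)` through the unit of `SU(2)`. -/
theorem su2_geodesic_entries (t φ₀ β : ℝ) (A B : ℂ)
    (hAre : A.re = β / Real.sqrt (1 + β^2) * Real.sin (t * Real.sqrt (1 + β^2) / 2) *
        Real.sin (β * t / 2) +
      Real.cos (t * Real.sqrt (1 + β^2) / 2) * Real.cos (β * t / 2))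
    (hAim : A.im = β / Real.sqrt (1 + β^2) * Real.sin (t * Real.sqrt (1 + β^2) / 2) *
        Real.cos (β * t / 2) -
      Real.cos (t * Real.sqrt (1 + β^2) / 2) * Real.sin (β * t / 2))
    (hB : B = (Real.sin (t * Real.sqrt (1 + β^2) / 2) / Real.sqrt (1 + β^2) : ℝ) *
      ((Real.cos (β * t / 2 + φ₀) : ℂ) + Complex.I * (Real.sin (β * t / 2 + φ₀) : ℂ))) :
    NormedSpace.exp ((t : ℂ) • ((Real.cos φ₀ : ℂ) • p₁ + (Real.sin φ₀ : ℂ) • p₂ + (β : ℂ) • k)) *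
      NormedSpace.exp ((-(t * β) : ℂ) • k) =
    !![A, B; -(starRingEnd ℂ) B, (starRingEnd ℂ) A] := by
  set s : ℝ := Real.sqrt (1 + β^2) with hs_def
  have hspos : 0 < s := Real.sqrt_pos.mpr (by positivity)
  have hs0 : s ≠ 0 := hspos.ne'
  have hs0' : (s:ℂ) ≠ 0 := by exact_mod_cast hs0
  have hs2 : (s:ℂ)^2 = 1 + (β:ℂ)^2 := by
    rw [hs_def, ← Complex.ofReal_pow, Real.sq_sqrt (by positivity : (0:ℝ) ≤ 1 + β^2)]
    push_cast; ring
  set N₁ : Matrix (Fin 2) (Fin 2) ℂ :=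
    ((s:ℂ))⁻¹ • !![Complex.I*β, (Real.cos φ₀:ℂ) + (Real.sin φ₀:ℂ)*Complex.I;
      -(Real.cos φ₀:ℂ) + (Real.sin φ₀:ℂ)*Complex.I, -(Complex.I*β)] with hN₁_def
  set N₂ : Matrix (Fin 2) (Fin 2) ℂ := !![-Complex.I, 0; 0, Complex.I] with hN₂_def
  have hN₁ : N₁ * N₁ = -1 := by
    rw [hN₁_def]
    ext i j
    fin_cases i <;> fin_cases j <;>
      simp [Matrix.mul_apply, Fin.sum_univ_two, Matrix.one_apply,
        -Complex.ofReal_cos, -Complex.ofReal_sin] <;>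
      field_simp <;>
      (first
        | ring1
        | (linear_combination ((β:ℂ)^2 + (Real.sin φ₀:ℂ)^2) * Complex.I_sq -
            (by exact_mod_cast Real.sin_sq_add_cos_sq φ₀ :
              (Real.sin φ₀:ℂ)^2 + (Real.cos φ₀:ℂ)^2 = 1) + hs2))
  have hN₂ : N₂ * N₂ = -1 := by
    rw [hN₂_def]
    ext i j
    fin_cases i <;> fin_cases j <;>
      simp [Matrix.mul_apply, Fin.sum_univ_two, Matrix.one_apply] <;> ring_nf <;>
      simp [Complex.I_sq]
  have e₁ : (t : ℂ) • ((Real.cos φ₀ : ℂ) • p₁ + (Real.sin φ₀ : ℂ) • p₂ + (β : ℂ) • k) =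
      ((t*s/2 : ℝ) : ℂ) • N₁ := by
    rw [hN₁_def]
    ext i j
    fin_cases i <;> fin_cases j <;>
      simp [p₁, p₂, k, Matrix.smul_apply, Matrix.add_apply, smul_eq_mul,
        -Complex.ofReal_cos, -Complex.ofReal_sin] <;>
      push_cast <;> field_simp <;> ring
  have e₂ : ((-(t * β)) : ℂ) • k = ((β*t/2 : ℝ) : ℂ) • N₂ := by
    rw [hN₂_def]
    ext i j
    fin_cases i <;> fin_cases j <;>
      simp [k, Matrix.smul_apply, smul_eq_mul] <;> push_cast <;> ring
  rw [e₁, e₂, exp_smul_sq_neg_one N₁ hN₁, exp_smul_sq_neg_one N₂ hN₂, hN₁_def, hN₂_def]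
  ext i j
  fin_cases i <;> fin_cases j <;>
    simp [Matrix.mul_apply, Fin.sum_univ_two, Matrix.smul_apply, Matrix.add_apply,
      Matrix.one_apply, smul_eq_mul, hB, Complex.ext_iff, Real.cos_add, Real.sin_add,
      hAre, hAim, -Complex.ofReal_cos, -Complex.ofReal_sin] <;>
    field_simp <;> (try ring_nf) <;> simp
end

section
/- For all real numbers φ₀ and β, setting t₀ = 2π/√(1+β²), the matrix exp(t₀(cos φ₀ · p₁ + sin φ₀ · p₂ + β·k)) · exp(−t₀β·k) equals the diagonal matrix [[A, 0],[0, conj(A)]] with A = −cos(πβ/√(1+β²)) + i·sin(πβ/√(1+β²)); in particular this matrix does not depend on φ₀. -/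
open Real Matrix

noncomputable def D : Matrix (Fin 2) (Fin 2) ℂ :=
  Matrix.diagonal ![Real.pi * Complex.I, -(Real.pi * Complex.I)]

lemma exp_D : NormedSpace.exp D = -1 := by
  rw [D, Matrix.exp_diagonal]
  have h : NormedSpace.exp ![(Real.pi : ℂ) * Complex.I, -(Real.pi * Complex.I)]
      = fun _ => (-1 : ℂ) := by
    rw [Pi.exp_def]
    funext i
    fin_cases i <;>
      simp [← Complex.exp_eq_exp_ℂ, Complex.exp_neg, Complex.exp_pi_mul_I, inv_neg, inv_one]
  rw [h]
  ext i j
  fin_cases i <;> fin_cases j <;> simp [Matrix.diagonal]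

lemma exp_conj_diag (M P : Matrix (Fin 2) (Fin 2) ℂ) (hdet : IsUnit P.det)
    (h : M * P = P * D) :
    NormedSpace.exp M = -1 := by
  have hP : IsUnit P := (Matrix.isUnit_iff_isUnit_det P).mpr hdet
  obtain ⟨U, rfl⟩ := hP
  have hM : M = (U : Matrix (Fin 2) (Fin 2) ℂ) * D * ((U⁻¹ : _ˣ) : Matrix (Fin 2) (Fin 2) ℂ) := by
    rw [← h, Matrix.coe_units_inv, mul_assoc, Matrix.mul_nonsing_inv _ hdet, mul_one]
  rw [hM, Matrix.exp_units_conj, exp_D]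
  calc (U : Matrix (Fin 2) (Fin 2) ℂ) * (-1) * ((U⁻¹ : _ˣ) : Matrix (Fin 2) (Fin 2) ℂ)
      = -((U : Matrix (Fin 2) (Fin 2) ℂ) * ((U⁻¹ : _ˣ) : Matrix (Fin 2) (Fin 2) ℂ)) := by
        rw [mul_neg_one, neg_mul]
    _ = -1 := by rw [U.mul_inv]

/-- At time `t₀ = 2π/√(1+β²)`, the sub-Riemannian geodesic of `SU(2)` through the unit
is the diagonal matrix `[[A,0],[0,conj A]]` with
`A = −cos(πβ/√(1+β²)) + i·sin(πβ/√(1+β²))`; in particular it does not depend on `φ₀`. -/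
theorem su2_geodesic_at_conjugate_time (φ₀ β : ℝ) (t₀ : ℝ) (A : ℂ)
    (ht₀ : t₀ = 2 * Real.pi / Real.sqrt (1 + β^2))
    (hA : A = -(Real.cos (Real.pi * β / Real.sqrt (1 + β^2)) : ℂ) +
      Complex.I * (Real.sin (Real.pi * β / Real.sqrt (1 + β^2)) : ℂ)) :
    NormedSpace.exp
        ((t₀ : ℂ) • ((Real.cos φ₀ : ℂ) • p₁ + (Real.sin φ₀ : ℂ) • p₂ + (β : ℂ) • k)) *
      NormedSpace.exp ((-(t₀ * β) : ℂ) • k) =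
    !![A, 0; 0, (starRingEnd ℂ) A] := by
  have hs : (0:ℝ) < Real.sqrt (1 + β^2) := Real.sqrt_pos.mpr (by positivity)
  set s : ℝ := Real.sqrt (1 + β^2) with hs_def
  have hs2 : s^2 = 1 + β^2 := Real.sq_sqrt (by positivity)
  have ht₀pos : 0 < t₀ := by rw [ht₀]; positivity
  have hsc : (s:ℂ) ≠ 0 := by exact_mod_cast hs.ne'
  have ht1 : (t₀:ℂ) * s = 2 * Real.pi := by
    rw [ht₀]; push_cast; field_simp
  have hpi : (t₀:ℂ)^2 * (1 + (β:ℂ)^2) = 4 * (Real.pi:ℂ)^2 := by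
    have h2 : (s:ℂ)^2 = 1 + (β:ℂ)^2 := by exact_mod_cast hs2
    rw [← h2]; linear_combination ((t₀:ℂ)*s + 2*Real.pi) * ht1
  have pyth : Complex.cos φ₀ ^2 + Complex.sin φ₀ ^2 = 1 := Complex.cos_sq_add_sin_sq _
  set a : ℂ := (t₀:ℂ) * β / 2 with ha_def
  set b : ℂ := ((t₀ : ℂ)/2) * (Complex.cos φ₀ + Complex.sin φ₀ * Complex.I) with hb_def
  -- the first exponential factor equals -1
  have hexp1 : NormedSpace.exp
      ((t₀ : ℂ) • ((Real.cos φ₀ : ℂ) • p₁ + (Real.sin φ₀ : ℂ) • p₂ + (β : ℂ) • k)) = -1 := by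
    apply exp_conj_diag _ !![b, b; Complex.I*(Real.pi - a), -(Complex.I*(Real.pi + a))]
    · rw [Matrix.det_fin_two_of]
      have hb0 : b ≠ 0 := by
        rw [hb_def, Complex.cos_add_sin_I]
        exact mul_ne_zero (div_ne_zero (by exact_mod_cast ht₀pos.ne') two_ne_zero) (Complex.exp_ne_zero _)
      have : b * -(Complex.I * ((Real.pi:ℂ) + a)) - b * (Complex.I * ((Real.pi:ℂ) - a))
          = -2 * Real.pi * Complex.I * b := by ring
      rw [this]
      refine isUnit_iff_ne_zero.mpr ?_
      have hπ : ((Real.pi:ℂ)) ≠ 0 := by exact_mod_cast Real.pi_ne_zero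
      exact mul_ne_zero (mul_ne_zero (mul_ne_zero (by norm_num) hπ) Complex.I_ne_zero) hb0
    · ext i j
      fin_cases i <;> fin_cases j <;>
        simp [p₁, p₂, k, D, ha_def, hb_def, Matrix.mul_apply, Fin.sum_univ_two,
          Matrix.diagonal]
      · ring
      · ring
      · linear_combination
          (((t₀:ℂ)^2 * Complex.sin φ₀ ^2)/4 + (t₀:ℂ)^2*(β:ℂ)^2/4 - (Real.pi:ℂ)^2)
            * Complex.I_sq - ((t₀:ℂ)^2/4) * pyth - (1/4) * hpi
      · linear_combination
          (((t₀:ℂ)^2 * Complex.sin φ₀ ^2)/4 + (t₀:ℂ)^2*(β:ℂ)^2/4 - (Real.pi:ℂ)^2)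
            * Complex.I_sq - ((t₀:ℂ)^2/4) * pyth - (1/4) * hpi
  -- the second exponential factor
  set θ : ℝ := Real.pi * β / s with hθ_def
  have hθ : t₀ * β / 2 = θ := by
    rw [ht₀, hθ_def]; field_simp
  have hk : ((-(t₀ * β) : ℂ)) • k
      = Matrix.diagonal ![((-θ:ℝ):ℂ) * Complex.I, ((θ:ℝ):ℂ) * Complex.I] := by
    ext i j
    fin_cases i <;> fin_cases j <;>
      simp [k, Matrix.diagonal] <;> push_cast [← hθ] <;> ring
  rw [hexp1, hk, Matrix.exp_diagonal]
  ext i j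
  rw [Pi.exp_def]
  fin_cases i <;> fin_cases j
  · simp [Matrix.diagonal, ← Complex.exp_eq_exp_ℂ, hA, Complex.ofReal_cos, Complex.ofReal_sin]
    rw [← neg_mul, Complex.exp_mul_I, Complex.cos_neg, Complex.sin_neg]
    ring
  · simp [Matrix.diagonal]
  · simp [Matrix.diagonal]
  · simp [Matrix.diagonal, ← Complex.exp_eq_exp_ℂ, Complex.exp_mul_I, hA,
      map_add, map_neg, _root_.map_mul, Complex.conj_I]
    simp [← Complex.ofReal_sin, ← Complex.ofReal_cos, Complex.conj_ofReal]
    ring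
end

section
/- Let a ∈ (0,1) and define F₁(β) = −(β/√(1+β²))·arcsin√((1−a²)(1+β²)) + arcsin(β·√(1−a²)/a) for β ∈ [−a/√(1−a²), a/√(1−a²)]. Then: (1) F₁ is an odd function; (2) F₁ is strictly increasing on its whole domain; (3) the range of F₁ is the segment [(π/2)(a−1), (π/2)(1−a)]. -/
open Real Set

/-- The argument function `F₁(β)` in the short-time case. -/
noncomputable def F₁ (a β : ℝ) : ℝ :=
  -(β / Real.sqrt (1 + β^2)) * Real.arcsin (Real.sqrt ((1 - a^2) * (1 + β^2))) +
    Real.arcsin (β * Real.sqrt (1 - a^2) / a)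

lemma F₁_odd (a β : ℝ) : F₁ a (-β) = -(F₁ a β) := by
  unfold F₁
  rw [neg_sq, show -β * Real.sqrt (1 - a^2) / a = -(β * Real.sqrt (1 - a^2) / a) by ring,
    Real.arcsin_neg]
  ring

lemma F₁_hasDerivAt (a : ℝ) (ha0 : 0 < a) (ha1 : a < 1) (β : ℝ)
    (hβ : (1 - a^2) * β^2 < a^2) :
    HasDerivAt (F₁ a)
      (-(Real.arcsin (Real.sqrt ((1 - a^2) * (1 + β^2))) / Real.sqrt (1 + β^2) ^ 3)
        + Real.sqrt (1 - a^2) / ((1 + β^2) * Real.sqrt (a^2 - (1 - a^2) * β^2))) β := by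
  have ha2 : (0:ℝ) < 1 - a^2 := by nlinarith
  have hs2 : (0:ℝ) < 1 + β^2 := by positivity
  set S := Real.sqrt (1 + β^2) with hSdef
  have hS : 0 < S := Real.sqrt_pos.2 hs2
  have hS2 : S^2 = 1 + β^2 := Real.sq_sqrt hs2.le
  set c := Real.sqrt (1 - a^2) with hcdef
  have hc : 0 < c := Real.sqrt_pos.2 ha2
  have hc2 : c^2 = 1 - a^2 := Real.sq_sqrt ha2.le
  have hq2 : (0:ℝ) < a^2 - (1 - a^2) * β^2 := by linarith
  set q := Real.sqrt (a^2 - (1 - a^2) * β^2) with hqdef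
  have hq : 0 < q := Real.sqrt_pos.2 hq2
  have hqq : q^2 = a^2 - (1 - a^2) * β^2 := Real.sq_sqrt hq2.le
  have hw : Real.sqrt ((1 - a^2) * (1 + β^2)) = c * S := Real.sqrt_mul ha2.le _
  have hwlt : c * S < 1 := by nlinarith [mul_pos hc hS]
  have hw0 : 0 < c * S := mul_pos hc hS
  have hdS : HasDerivAt (fun x : ℝ => Real.sqrt (1 + x^2)) (β / S) β := by
    have h1 : HasDerivAt (fun x : ℝ => 1 + x^2) (2*β) β := by
      simpa using ((hasDerivAt_pow 2 β).const_add 1)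
    have h2 := h1.sqrt (by positivity)
    convert h2 using 1
    rw [← hSdef]; field_simp
  have hdg1 : HasDerivAt (fun x : ℝ => x / Real.sqrt (1 + x^2)) (1 / S^3) β := by
    have h2 := (hasDerivAt_id β).div hdS hS.ne'
    refine h2.congr_deriv (Eq.symm ?_)
    rw [← hSdef]
    simp only [id]
    field_simp
    linear_combination (-1) * hS2
  have hdw : HasDerivAt (fun x : ℝ => Real.sqrt ((1 - a^2) * (1 + x^2)))
      ((1 - a^2) * β / (c * S)) β := by
    have h1 : HasDerivAt (fun x : ℝ => (1 - a^2) * (1 + x^2)) ((1 - a^2) * (2*β)) β := by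
      have := ((hasDerivAt_pow 2 β).const_add 1).const_mul (1 - a^2)
      refine this.congr_deriv (Eq.symm ?_); ring
    have h2 := h1.sqrt (by positivity)
    convert h2 using 1
    rw [hw]; field_simp
  have hdg2 : HasDerivAt (fun x : ℝ => Real.arcsin (Real.sqrt ((1 - a^2) * (1 + x^2))))
      (1 / q * ((1 - a^2) * β / (c * S))) β := by
    have harc := Real.hasDerivAt_arcsin (x := Real.sqrt ((1 - a^2) * (1 + β^2)))
      (by rw [hw]; linarith) (by rw [hw]; exact hwlt.ne)
    have h2 := harc.comp β hdw
    rw [hw, show (1:ℝ) - (c*S)^2 = a^2 - (1-a^2)*β^2 from by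
      linear_combination (-S^2) * hc2 - (1-a^2) * hS2, ← hqdef] at h2
    simpa [Function.comp_def] using h2
  have hdg3 : HasDerivAt (fun x : ℝ => Real.arcsin (x * c / a)) (a / q * (c / a)) β := by
    have hlt : (β * c / a)^2 < 1 := by
      rw [div_pow, div_lt_one (by positivity), mul_pow, hc2]; nlinarith
    have habs : |β * c / a| < 1 := (sq_lt_one_iff_abs_lt_one _).mp hlt
    have h1 : HasDerivAt (fun x : ℝ => x * c / a) (c / a) β := by
      simpa using ((hasDerivAt_id β).mul_const c).div_const a
    have harc := Real.hasDerivAt_arcsin (x := β * c / a)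
      (by nlinarith [abs_lt.1 habs]) (by nlinarith [abs_lt.1 habs])
    have h2 := harc.comp β h1
    rw [show 1 - (β * c / a)^2 = (a^2 - (1-a^2)*β^2) / a^2 from by
      rw [div_pow, mul_pow, hc2]; field_simp,
      Real.sqrt_div hq2.le, Real.sqrt_sq ha0.le, ← hqdef,
      show 1 / (q / a) = a / q from by rw [one_div_div]] at h2
    simpa [Function.comp_def] using h2
  -- assemble
  have htot := ((hdg1.mul hdg2).neg).add hdg3
  have heq : F₁ a = fun x : ℝ =>
      -(x / Real.sqrt (1 + x^2) * Real.arcsin (Real.sqrt ((1 - a^2) * (1 + x^2)))) +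
        Real.arcsin (x * c / a) := by
    funext x; unfold F₁; rw [← hcdef]; ring
  rw [heq]
  refine htot.congr_deriv (Eq.symm ?_)
  rw [hw]
  field_simp
  linear_combination (-(β^2*S^4)) * hc2 + (-(β^2*S^2*(1-a^2))) * hS2

lemma F₁_deriv_pos (a : ℝ) (ha0 : 0 < a) (ha1 : a < 1) (β : ℝ)
    (hβ : (1 - a^2) * β^2 < a^2) :
    0 < -(Real.arcsin (Real.sqrt ((1 - a^2) * (1 + β^2))) / Real.sqrt (1 + β^2) ^ 3)
        + Real.sqrt (1 - a^2) / ((1 + β^2) * Real.sqrt (a^2 - (1 - a^2) * β^2)) := by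
  have ha2 : (0:ℝ) < 1 - a^2 := by nlinarith
  have hs2 : (0:ℝ) < 1 + β^2 := by positivity
  set S := Real.sqrt (1 + β^2) with hSdef
  have hS : 0 < S := Real.sqrt_pos.2 hs2
  have hS2 : S^2 = 1 + β^2 := Real.sq_sqrt hs2.le
  set c := Real.sqrt (1 - a^2) with hcdef
  have hc : 0 < c := Real.sqrt_pos.2 ha2
  have hc2 : c^2 = 1 - a^2 := Real.sq_sqrt ha2.le
  have hq2 : (0:ℝ) < a^2 - (1 - a^2) * β^2 := by linarith
  set q := Real.sqrt (a^2 - (1 - a^2) * β^2) with hqdef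
  have hq : 0 < q := Real.sqrt_pos.2 hq2
  have hw : Real.sqrt ((1 - a^2) * (1 + β^2)) = c * S := Real.sqrt_mul ha2.le _
  have hwlt : c * S < 1 := by nlinarith [mul_pos hc hS]
  have hw0 : 0 < c * S := mul_pos hc hS
  have hθ : Real.arcsin (c * S) < c * S / q := by
    have h1 := Real.lt_tan (Real.arcsin_pos.2 hw0) (Real.arcsin_lt_pi_div_two.2 hwlt)
    rwa [Real.tan_arcsin, show (1:ℝ) - (c*S)^2 = a^2 - (1-a^2)*β^2 from by
      linear_combination (-S^2) * hc2 - (1-a^2) * hS2, ← hqdef] at h1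
  have h2 : Real.arcsin (c * S) * q < c * S := by
    have h3 := mul_lt_mul_of_pos_right hθ hq
    rwa [div_mul_cancel₀ _ hq.ne'] at h3
  have h4 : Real.arcsin (c * S) / S^3 < c / ((1 + β^2) * q) := by
    rw [div_lt_div_iff₀ (by positivity) (by positivity)]
    have h5 := mul_lt_mul_of_pos_right h2 hs2
    nlinarith [h5, hS2, hS]
  rw [hw]
  linarith

lemma F₁_endpoint (a : ℝ) (ha0 : 0 < a) (ha1 : a < 1) :
    F₁ a (a / Real.sqrt (1 - a^2)) = Real.pi / 2 * (1 - a) := by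
  have ha2 : (0:ℝ) < 1 - a^2 := by nlinarith
  set c := Real.sqrt (1 - a^2) with hcdef
  have hc : 0 < c := Real.sqrt_pos.2 ha2
  have hc2 : c^2 = 1 - a^2 := Real.sq_sqrt ha2.le
  have h1 : 1 + (a/c)^2 = (1/c)^2 := by
    field_simp
    linear_combination hc2
  have hsq : Real.sqrt (1 + (a/c)^2) = 1/c := by
    rw [h1, Real.sqrt_sq (by positivity)]
  have hterm1 : (a/c) / (1/c) = a := by field_simp
  have hin1 : (1 - a^2) * (1 + (a/c)^2) = 1 := by
    rw [h1]
    field_simp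
    linear_combination -hc2
  have hin2 : (a/c) * c / a = 1 := by field_simp
  unfold F₁
  rw [← hcdef, hsq, hterm1, hin1, hin2, Real.sqrt_one, Real.arcsin_one]
  ring

lemma F₁_continuous (a : ℝ) (ha0 : 0 < a) : Continuous (F₁ a) := by
  unfold F₁
  have h1 : Continuous fun β : ℝ => β / Real.sqrt (1 + β^2) :=
    continuous_id.div (Real.continuous_sqrt.comp (by continuity))
      (fun x => (Real.sqrt_pos.2 (by positivity)).ne')
  exact ((h1.neg.mul (Real.continuous_arcsin.comp
    (Real.continuous_sqrt.comp (by continuity)))).add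
    (Real.continuous_arcsin.comp ((continuous_id.mul continuous_const).div_const a)))


/-- `F₁` is odd, strictly increasing on its domain `[−a/√(1−a²), a/√(1−a²)]`, with range
`[(π/2)(a−1), (π/2)(1−a)]`. -/
theorem F₁_properties (a : ℝ) (ha : a ∈ Set.Ioo (0:ℝ) 1) :
    (∀ β : ℝ, F₁ a (-β) = -(F₁ a β)) ∧
    StrictMonoOn (F₁ a) (Set.Icc (-(a / Real.sqrt (1 - a^2))) (a / Real.sqrt (1 - a^2))) ∧
    F₁ a '' Set.Icc (-(a / Real.sqrt (1 - a^2))) (a / Real.sqrt (1 - a^2)) =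
      Set.Icc (Real.pi / 2 * (a - 1)) (Real.pi / 2 * (1 - a)) := by
  obtain ⟨ha0, ha1⟩ := ha
  have ha2 : (0:ℝ) < 1 - a^2 := by nlinarith
  have hc : 0 < Real.sqrt (1 - a^2) := Real.sqrt_pos.2 ha2
  have hc2 : Real.sqrt (1 - a^2)^2 = 1 - a^2 := Real.sq_sqrt ha2.le
  set b := a / Real.sqrt (1 - a^2) with hbdef
  have hb : 0 < b := by positivity
  have hcont := F₁_continuous a ha0
  have hmono : StrictMonoOn (F₁ a) (Set.Icc (-b) b) := by
    apply strictMonoOn_of_deriv_pos (convex_Icc _ _) hcont.continuousOn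
    intro x hx
    rw [interior_Icc] at hx
    have hx2 : (1 - a^2) * x^2 < a^2 := by
      have h1 : x < b := hx.2
      have h2 : -b < x := hx.1
      have h3 : x^2 < b^2 := by nlinarith
      have hb2 : b^2 = a^2 / (1 - a^2) := by
        rw [hbdef, div_pow, hc2]
      rw [hb2] at h3
      calc (1 - a^2) * x^2 < (1 - a^2) * (a^2 / (1 - a^2)) := by
            exact mul_lt_mul_of_pos_left h3 ha2
        _ = a^2 := by field_simp
    rw [(F₁_hasDerivAt a ha0 ha1 x hx2).deriv]
    exact F₁_deriv_pos a ha0 ha1 x hx2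
  refine ⟨fun β => F₁_odd a β, hmono, ?_⟩
  have hhi : F₁ a b = Real.pi / 2 * (1 - a) := F₁_endpoint a ha0 ha1
  have hlo : F₁ a (-b) = Real.pi / 2 * (a - 1) := by
    rw [F₁_odd, hhi]; ring
  apply Set.Subset.antisymm
  · rintro y ⟨x, hx, rfl⟩
    have hmem1 : -b ∈ Set.Icc (-b) b := ⟨le_refl _, by linarith⟩
    have hmem2 : b ∈ Set.Icc (-b) b := ⟨by linarith, le_refl _⟩
    exact ⟨hlo ▸ hmono.monotoneOn hmem1 hx hx.1, hhi ▸ hmono.monotoneOn hx hmem2 hx.2⟩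
  · have h := intermediate_value_Icc (by linarith : -b ≤ b) hcont.continuousOn
    rw [hlo, hhi] at h
    exact h
end

section
/- Let a ∈ (0,1) and define F₂(β) = (β/√(1+β²))·(π − arcsin√((1−a²)(1+β²))) + arcsin(β·√(1−a²)/a) for β ∈ [−a/√(1−a²), a/√(1−a²)]. Then: (1) F₂ is an odd function; (2) F₂ is strictly increasing on its whole domain; (3) the range of F₂ is the segment [−(π/2)(1+a), (π/2)(1+a)]. -/
open Real Set

/-- The argument function `F₂(β)` in the long-time case. -/
noncomputable def F₂ (a β : ℝ) : ℝ :=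
  β / Real.sqrt (1 + β^2) * (Real.pi - Real.arcsin (Real.sqrt ((1 - a^2) * (1 + β^2)))) +
    Real.arcsin (β * Real.sqrt (1 - a^2) / a)

lemma F2_cont (a : ℝ) : Continuous (F₂ a) := by
  unfold F₂
  have h : ∀ β : ℝ, Real.sqrt (1 + β^2) ≠ 0 := fun β =>
    ne_of_gt (Real.sqrt_pos.mpr (by positivity))
  apply Continuous.add
  · exact (continuous_id.div (by continuity) h).mul
      (continuous_const.sub (Real.continuous_arcsin.comp (by continuity)))
  · exact Real.continuous_arcsin.comp (by continuity)

lemma F2_deriv (a : ℝ) (ha1 : 0 < a) (ha2 : a < 1) (x : ℝ)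
    (hx : (1 - a^2) * x^2 < a^2) :
    ∃ d, 0 < d ∧ HasDerivAt (F₂ a) d x := by
  have h1a : (0:ℝ) < 1 - a^2 := by nlinarith
  set c := Real.sqrt (1 - a^2) with hcdef
  have hc0 : 0 < c := Real.sqrt_pos.mpr h1a
  have hc2 : c^2 = 1 - a^2 := Real.sq_sqrt h1a.le
  have hs2pos : (0:ℝ) < 1 + x^2 := by positivity
  set s := Real.sqrt (1 + x^2) with hsdef
  have hs0 : 0 < s := Real.sqrt_pos.mpr hs2pos
  have hs2 : s^2 = 1 + x^2 := Real.sq_sqrt hs2pos.le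
  have hq2pos : (0:ℝ) < a^2 - (1 - a^2) * x^2 := by linarith
  set q := Real.sqrt (a^2 - (1 - a^2) * x^2) with hqdef
  have hq0 : 0 < q := Real.sqrt_pos.mpr hq2pos
  have hq2 : q^2 = a^2 - (1 - a^2) * x^2 := Real.sq_sqrt hq2pos.le
  have hcs : Real.sqrt ((1 - a^2) * (1 + x^2)) = c * s := Real.sqrt_mul h1a.le _
  have hu1 : c * s < 1 := by nlinarith [mul_pos hc0 hs0]
  have hu0 : 0 ≤ c * s := by positivity
  have hg : HasDerivAt (fun β : ℝ => (1 - a^2) * (1 + β^2)) ((1 - a^2) * (2 * x)) x := by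
    have := ((hasDerivAt_pow 2 x).const_add 1).const_mul (1 - a^2)
    simpa using this
  have hgx : (1 - a^2) * (1 + x^2) ≠ 0 := by positivity
  have hsqg : HasDerivAt (fun β : ℝ => Real.sqrt ((1 - a^2) * (1 + β^2)))
      (1 / (2 * (c * s)) * ((1 - a^2) * (2 * x))) x := by
    have h := (Real.hasDerivAt_sqrt hgx).comp x hg
    rw [hcs] at h
    simpa [Function.comp_def] using h
  have harcpt : HasDerivAt Real.arcsin (1 / Real.sqrt (1 - (c*s)^2))
      (Real.sqrt ((1 - a^2) * (1 + x^2))) := by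
    rw [hcs]
    exact Real.hasDerivAt_arcsin (by linarith) (ne_of_lt hu1)
  have harc1 : HasDerivAt (fun β : ℝ => Real.arcsin (Real.sqrt ((1 - a^2) * (1 + β^2))))
      (1 / Real.sqrt (1 - (c*s)^2) * (1 / (2 * (c * s)) * ((1 - a^2) * (2 * x)))) x := by
    simpa [Function.comp_def] using harcpt.comp x hsqg
  have hg2 : HasDerivAt (fun β : ℝ => (1 : ℝ) + β^2) (2 * x) x := by
    have := (hasDerivAt_pow 2 x).const_add 1
    simpa using this
  have hsq2 : HasDerivAt (fun β : ℝ => Real.sqrt (1 + β^2)) (1 / (2 * s) * (2 * x)) x := by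
    have h := (Real.hasDerivAt_sqrt (ne_of_gt hs2pos)).comp x hg2
    simpa [Function.comp_def, ← hsdef] using h
  have hdiv : HasDerivAt (fun β : ℝ => β / Real.sqrt (1 + β^2))
      ((1 * s - x * (1 / (2 * s) * (2 * x))) / s^2) x :=
    (hasDerivAt_id x).div hsq2 (ne_of_gt hs0)
  have hsub : HasDerivAt
      (fun β : ℝ => Real.pi - Real.arcsin (Real.sqrt ((1 - a^2) * (1 + β^2))))
      (-(1 / Real.sqrt (1 - (c*s)^2) * (1 / (2 * (c * s)) * ((1 - a^2) * (2 * x))))) x :=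
    harc1.const_sub Real.pi
  have hmul := hdiv.mul hsub
  have hv2 : (x * c / a)^2 < 1 := by
    rw [div_pow, mul_pow, hc2, div_lt_one (by positivity)]
    nlinarith
  have hvne1 : x * c / a ≠ 1 := by intro h; rw [h] at hv2; norm_num at hv2
  have hvne1' : x * c / a ≠ -1 := by intro h; rw [h] at hv2; norm_num at hv2
  have hlin : HasDerivAt (fun β : ℝ => β * c / a) (1 * c / a) x :=
    ((hasDerivAt_id x).mul_const c).div_const a
  have harc2 : HasDerivAt (fun β : ℝ => Real.arcsin (β * c / a))
      (1 / Real.sqrt (1 - (x * c / a)^2) * (1 * c / a)) x := by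
    simpa [Function.comp_def] using (Real.hasDerivAt_arcsin hvne1' hvne1).comp x hlin
  have htot := hmul.add harc2
  -- rewrite the sqrt's in the derivative value
  have hQ1 : Real.sqrt (1 - (c*s)^2) = q := by
    rw [show 1 - (c*s)^2 = q^2 by rw [hq2, mul_pow, hc2, hs2]; ring, Real.sqrt_sq hq0.le]
  have hQ2 : Real.sqrt (1 - (x * c / a)^2) = q / a := by
    rw [show 1 - (x*c/a)^2 = (q/a)^2 by
      rw [div_pow, div_pow, mul_pow, hc2, hq2]; field_simp, Real.sqrt_sq (by positivity)]
  rw [hQ1, hQ2] at htot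
  refine ⟨_, ?_, htot⟩
  -- positivity of the derivative value
  have hP : 0 < Real.pi - Real.arcsin (Real.sqrt ((1 - a^2) * (1 + x^2))) := by
    have := Real.arcsin_le_pi_div_two (Real.sqrt ((1 - a^2) * (1 + x^2)))
    linarith [Real.pi_pos]
  have e1 : (1 * s - x * (1 / (2 * s) * (2 * x))) / s^2 = 1 / (s^2 * s) := by
    rw [div_eq_div_iff (by positivity) (by positivity)]
    field_simp
    linear_combination hs2
  have e2 : x / s * -(1 / q * (1 / (2 * (c * s)) * ((1 - a^2) * (2 * x)))) +
      1 / (q / a) * (1 * c / a) = c / (q * s^2) := by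
    rw [← hc2]
    field_simp
    linear_combination hs2
  rw [show (1 * s - x * (1 / (2 * s) * (2 * x))) / s ^ 2 *
        (Real.pi - Real.arcsin (Real.sqrt ((1 - a^2) * (1 + x^2)))) +
        x / s * -(1 / q * (1 / (2 * (c * s)) * ((1 - a^2) * (2 * x)))) +
        1 / (q / a) * (1 * c / a) =
      (1 * s - x * (1 / (2 * s) * (2 * x))) / s ^ 2 *
        (Real.pi - Real.arcsin (Real.sqrt ((1 - a^2) * (1 + x^2)))) +
        (x / s * -(1 / q * (1 / (2 * (c * s)) * ((1 - a^2) * (2 * x)))) +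
        1 / (q / a) * (1 * c / a)) from by ring, e1, e2]
  positivity

lemma F2_odd (a : ℝ) (β : ℝ) : F₂ a (-β) = -(F₂ a β) := by
  unfold F₂
  rw [show (-β)^2 = β^2 from by ring, show -β * Real.sqrt (1 - a^2) / a =
    -(β * Real.sqrt (1 - a^2) / a) from by ring, Real.arcsin_neg, neg_div]
  ring

lemma F2_endpoint (a : ℝ) (ha1 : 0 < a) (ha2 : a < 1) :
    F₂ a (a / Real.sqrt (1 - a^2)) = Real.pi / 2 * (1 + a) := by
  have h1a : (0:ℝ) < 1 - a^2 := by nlinarith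
  set c := Real.sqrt (1 - a^2) with hcdef
  have hc0 : 0 < c := Real.sqrt_pos.mpr h1a
  have hc2 : c^2 = 1 - a^2 := Real.sq_sqrt h1a.le
  have e1 : 1 + (a/c)^2 = (1/c)^2 := by field_simp; linarith
  have e2 : Real.sqrt (1 + (a/c)^2) = 1/c := by rw [e1, Real.sqrt_sq (by positivity)]
  have e4 : (1 - a^2) * (1 + (a/c)^2) = 1 := by rw [e1, ← hc2]; field_simp
  have e5 : a / c * c / a = 1 := by field_simp
  unfold F₂
  rw [e2, e4, e5, Real.sqrt_one, Real.arcsin_one,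
    show a / c / (1/c) = a from by field_simp]
  ring

/-- `F₂` is odd, strictly increasing on its domain `[−a/√(1−a²), a/√(1−a²)]`, with range
`[−(π/2)(1+a), (π/2)(1+a)]`. -/
theorem F₂_properties (a : ℝ) (ha : a ∈ Set.Ioo (0:ℝ) 1) :
    (∀ β : ℝ, F₂ a (-β) = -(F₂ a β)) ∧
    StrictMonoOn (F₂ a) (Set.Icc (-(a / Real.sqrt (1 - a^2))) (a / Real.sqrt (1 - a^2))) ∧
    F₂ a '' Set.Icc (-(a / Real.sqrt (1 - a^2))) (a / Real.sqrt (1 - a^2)) =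
      Set.Icc (-(Real.pi / 2 * (1 + a))) (Real.pi / 2 * (1 + a)) := by
  obtain ⟨ha1, ha2⟩ := ha
  have h1a : (0:ℝ) < 1 - a^2 := by nlinarith
  have hc0 : 0 < Real.sqrt (1 - a^2) := Real.sqrt_pos.mpr h1a
  have hc2 : (Real.sqrt (1 - a^2))^2 = 1 - a^2 := Real.sq_sqrt h1a.le
  set b := a / Real.sqrt (1 - a^2) with hbdef
  have hb0 : 0 < b := div_pos ha1 hc0
  have hmono : StrictMonoOn (F₂ a) (Set.Icc (-b) b) := by
    apply strictMonoOn_of_deriv_pos (convex_Icc _ _) (F2_cont a).continuousOn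
    intro x hx
    rw [interior_Icc, Set.mem_Ioo] at hx
    have hx2 : x^2 < b^2 := sq_lt_sq' hx.1 hx.2
    have hxx : (1 - a^2) * x^2 < a^2 := by
      have hb2 : b^2 = a^2 / (1 - a^2) := by rw [hbdef, div_pow, hc2]
      rw [hb2] at hx2
      calc (1 - a^2) * x^2 < (1 - a^2) * (a^2 / (1 - a^2)) := by
            exact mul_lt_mul_of_pos_left hx2 h1a
        _ = a^2 := by field_simp
    obtain ⟨d, hd0, hdd⟩ := F2_deriv a ha1 ha2 x hxx
    rw [hdd.deriv]; exact hd0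
  have hend : F₂ a b = Real.pi / 2 * (1 + a) := F2_endpoint a ha1 ha2
  have hend' : F₂ a (-b) = -(Real.pi / 2 * (1 + a)) := by rw [F2_odd, hend]
  refine ⟨F2_odd a, hmono, ?_⟩
  apply Set.Subset.antisymm
  · rintro y ⟨x, hx, rfl⟩
    have hl := hmono.monotoneOn (Set.left_mem_Icc.mpr (by linarith)) hx hx.1
    have hr := hmono.monotoneOn hx (Set.right_mem_Icc.mpr (by linarith)) hx.2
    rw [hend] at hr
    rw [hend'] at hl
    exact ⟨hl, hr⟩
  · have := intermediate_value_Icc (show -b ≤ b by linarith) (F2_cont a).continuousOn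
    rw [hend, hend'] at this
    exact this
end

section
/- Define F(β) = πβ/√(1+β²) for β ∈ ℝ. If β₁, β₂ are real numbers with |F(β₁) − F(β₂)| = π and cos(F(β₁)) < 0, then |β₁| > |β₂|, and consequently 2π/√(1+β₁²) < 2π/√(1+β₂²). -/
open Real

/-- If `F(β) = πβ/√(1+β²)`, `|F(β₁) − F(β₂)| = π` and `cos(F(β₁)) < 0`, then
`|β₁| > |β₂|` and `2π/√(1+β₁²) < 2π/√(1+β₂²)`. -/
theorem beta_comparison (β₁ β₂ : ℝ) (F : ℝ → ℝ)
    (hF : ∀ β : ℝ, F β = Real.pi * β / Real.sqrt (1 + β^2))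
    (hdiff : |F β₁ - F β₂| = Real.pi) (hcos : Real.cos (F β₁) < 0) :
    |β₁| > |β₂| ∧
    2 * Real.pi / Real.sqrt (1 + β₁^2) < 2 * Real.pi / Real.sqrt (1 + β₂^2) := by
  have hpi := Real.pi_pos
  have hs : ∀ b : ℝ, 0 < Real.sqrt (1 + b^2) := fun b => Real.sqrt_pos.2 (by positivity)
  have hsq : ∀ b : ℝ, (Real.sqrt (1 + b^2))^2 = 1 + b^2 := fun b => Real.sq_sqrt (by positivity)
  have habsF : ∀ b : ℝ, |F b| = Real.pi * |b| / Real.sqrt (1 + b^2) := by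
    intro b
    rw [hF, abs_div, abs_mul, abs_of_pos hpi, abs_of_pos (hs b)]
  have hlt : ∀ b : ℝ, |F b| < Real.pi := by
    intro b
    rw [habsF, div_lt_iff₀ (hs b)]
    have hb : |b| < Real.sqrt (1 + b^2) := by
      rw [← Real.sqrt_sq_eq_abs]
      exact Real.sqrt_lt_sqrt (sq_nonneg b) (by linarith)
    nlinarith [abs_nonneg b, hs b]
  have hx : Real.pi / 2 < |F β₁| := by
    by_contra h
    push_neg at h
    have := Real.cos_nonneg_of_mem_Icc (x := F β₁)
      ⟨by linarith [(abs_le.1 h).1], (abs_le.1 h).2⟩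
    linarith
  have hy : |F β₂| < |F β₁| := by
    have h1 := hlt β₁
    have h2 := hlt β₂
    rcases abs_cases (F β₁ - F β₂) with ⟨e, _⟩ | ⟨e, _⟩ <;>
      rcases abs_cases (F β₁) with ⟨a1, b1⟩ | ⟨a1, b1⟩ <;>
      rcases abs_cases (F β₂) with ⟨a2, b2⟩ | ⟨a2, b2⟩ <;>
      rw [hdiff] at e <;> linarith
  have hb : |β₂| < |β₁| := by
    by_contra h
    push_neg at h
    have e1 := hsq β₁
    have e2 := hsq β₂
    have hsq2 : (|β₁| * Real.sqrt (1 + β₂^2))^2 ≤ (|β₂| * Real.sqrt (1 + β₁^2))^2 := by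
      nlinarith [sq_abs β₁, sq_abs β₂, abs_nonneg β₁, abs_nonneg β₂]
    have hcross : |β₁| * Real.sqrt (1 + β₂^2) ≤ |β₂| * Real.sqrt (1 + β₁^2) := by
      have := Real.sqrt_le_sqrt hsq2
      rwa [Real.sqrt_sq (by positivity), Real.sqrt_sq (by positivity)] at this
    have key : Real.pi * |β₁| / Real.sqrt (1 + β₁^2) ≤ Real.pi * |β₂| / Real.sqrt (1 + β₂^2) := by
      rw [div_le_div_iff₀ (hs β₁) (hs β₂)]
      nlinarith [hpi]
    rw [habsF, habsF] at hy
    linarith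
  refine ⟨hb, ?_⟩
  have hslt : Real.sqrt (1 + β₂^2) < Real.sqrt (1 + β₁^2) := by
    apply Real.sqrt_lt_sqrt (by positivity)
    nlinarith [sq_abs β₁, sq_abs β₂, abs_nonneg β₂]
  exact div_lt_div_of_pos_left (by linarith) (hs β₂) hslt
end

section
/- Let M be a real 3×3 matrix with MᵀM = I, det M = 1, and M ≠ I. Then M² = I if and only if there exist real numbers a₂, b₁, b₂ with a₂² + b₁² + b₂² = 1 such that M = [[a₂²−b₁²−b₂², 2a₂b₁, 2a₂b₂], [2a₂b₁, −a₂²+b₁²−b₂², 2b₁b₂], [2a₂b₂, 2b₂b₁, −a₂²−b₁²+b₂²]]. -/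
lemma so3_case0 (a b c d e f : ℝ)
    (h1 : a^2+b^2+c^2 = 1) (h2 : b^2+d^2+e^2 = 1) (h3 : c^2+e^2+f^2 = 1)
    (h4 : a*b+b*d+c*e = 0) (h5 : a*c+b*e+c*f = 0) (h6 : b*c+d*e+e*f = 0)
    (ht : a+d+f = -1) (ha : 0 < 1 + a) :
    ∃ x y z : ℝ, x^2+y^2+z^2 = 1 ∧ a = x^2-y^2-z^2 ∧ b = 2*x*y ∧ c = 2*x*z ∧
      d = -x^2+y^2-z^2 ∧ e = 2*y*z ∧ f = -x^2-y^2+z^2 := by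
  have hid1 : 4*((1+a)*(1+d) - b^2) =
      ((1+a)*(1+d) - b^2)^2 + ((1+a)*e - b*c)^2 + (b*e - c*(1+d))^2 := by
    linear_combination (-(b^2+(1+d)^2+e^2))*h1 - (2*(1+a))*h2 + (a*b+b*d+c*e+4*b)*h4
  have hid2 : 4*((1+a)*(1+f) - c^2) =
      ((1+a)*(1+f) - c^2)^2 + ((1+a)*e - b*c)^2 + (c*e - b*(1+f))^2 := by
    linear_combination (-(c^2+e^2+(1+f)^2))*h1 - (2*(1+a))*h3 + (a*c+b*e+c*f+4*c)*h5
  have hid3 : 4*((1+d)*(1+f) - e^2) =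
      ((1+d)*(1+f) - e^2)^2 + ((1+d)*c - b*e)^2 + (b*(1+f) - c*e)^2 := by
    linear_combination (-(c^2+e^2+(1+f)^2))*h2 - (2*(1+d))*h3 + (b*c+d*e+e*f+4*e)*h6
  have hnn1 : 0 ≤ (1+a)*(1+d) - b^2 := by
    linarith [hid1, sq_nonneg ((1+a)*(1+d) - b^2), sq_nonneg ((1+a)*e - b*c), sq_nonneg (b*e - c*(1+d))]
  have hnn2 : 0 ≤ (1+a)*(1+f) - c^2 := by
    linarith [hid2, sq_nonneg ((1+a)*(1+f) - c^2), sq_nonneg ((1+a)*e - b*c), sq_nonneg (c*e - b*(1+f))]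
  have hnn3 : 0 ≤ (1+d)*(1+f) - e^2 := by
    linarith [hid3, sq_nonneg ((1+d)*(1+f) - e^2), sq_nonneg ((1+d)*c - b*e), sq_nonneg (b*(1+f) - c*e)]
  have hsum : ((1+a)*(1+d) - b^2) + ((1+a)*(1+f) - c^2) + ((1+d)*(1+f) - e^2) = 0 := by
    linear_combination ((a+d+f+3)/2) * ht - (1/2)*h1 - (1/2)*h2 - (1/2)*h3
  have hm1 : (1+a)*(1+d) = b^2 := by linarith
  have hm2 : (1+a)*(1+f) = c^2 := by linarith
  have hr : e*(1+a) = b*c := by linear_combination e*ht - h6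
  set x := Real.sqrt ((1+a)/2) with hxdef
  have hx2 : x^2 = (1+a)/2 := Real.sq_sqrt (by linarith)
  have hxpos : 0 < x := Real.sqrt_pos.2 (by linarith)
  have hxne : x ≠ 0 := ne_of_gt hxpos
  have h4x : (2*x)^2 = 2*(1+a) := by linear_combination 4*hx2
  have hane : (1:ℝ)+a ≠ 0 := by linarith
  have hy2 : (b/(2*x))^2 = (1+d)/2 := by
    rw [div_pow, h4x, div_eq_iff (by linarith)]; linear_combination (-1)*hm1
  have hz2 : (c/(2*x))^2 = (1+f)/2 := by
    rw [div_pow, h4x, div_eq_iff (by linarith)]; linear_combination (-1)*hm2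
  refine ⟨x, b/(2*x), c/(2*x), ?_, ?_, ?_, ?_, ?_, ?_, ?_⟩
  · rw [hx2, hy2, hz2]; linarith
  · rw [hx2, hy2, hz2]; linarith
  · field_simp
  · field_simp
  · rw [hx2, hy2, hz2]; linarith
  · have he : 2*(b/(2*x))*(c/(2*x)) = b*c/(2*x^2) := by field_simp
    rw [he, hx2]
    rw [show (2:ℝ)*((1+a)/2) = 1+a by ring, eq_div_iff hane]
    linear_combination hr
  · rw [hx2, hy2, hz2]; linarith

lemma so3_scalar (a b c d e f : ℝ)
    (h1 : a^2+b^2+c^2 = 1) (h2 : b^2+d^2+e^2 = 1) (h3 : c^2+e^2+f^2 = 1)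
    (h4 : a*b+b*d+c*e = 0) (h5 : a*c+b*e+c*f = 0) (h6 : b*c+d*e+e*f = 0)
    (hdet : a*d*f - a*e^2 - b^2*f + 2*b*c*e - c^2*d = 1)
    (hne : ¬(a = 1 ∧ b = 0 ∧ c = 0 ∧ d = 1 ∧ e = 0 ∧ f = 1)) :
    ∃ x y z : ℝ, x^2+y^2+z^2 = 1 ∧ a = x^2-y^2-z^2 ∧ b = 2*x*y ∧ c = 2*x*z ∧
      d = -x^2+y^2-z^2 ∧ e = 2*y*z ∧ f = -x^2-y^2+z^2 := by
  set s := (a*d-b^2)+(a*f-c^2)+(d*f-e^2) with hsdef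
  have hs2 : 2*s = (a+d+f)^2 - 3 := by
    rw [hsdef]; linear_combination (-1)*h1 - h2 - h3
  have cA : a*(1+s) = (a+d+f)+1 := by
    rw [hsdef]; linear_combination (d+f)*h1 - b*h4 - c*h5 + hdet
  have cD : d*(1+s) = (a+d+f)+1 := by
    rw [hsdef]; linear_combination (a+f)*h2 - b*h4 - e*h6 + hdet
  have cF : f*(1+s) = (a+d+f)+1 := by
    rw [hsdef]; linear_combination (a+d)*h3 - c*h5 - e*h6 + hdet
  have cB : b*(1+s) = 0 := by
    rw [hsdef]; linear_combination (-b)*h2 + (d+f)*h4 - c*h6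
  have cC : c*(1+s) = 0 := by
    rw [hsdef]; linear_combination (-c)*h3 + (d+f)*h5 - b*h6
  have cE : e*(1+s) = 0 := by
    rw [hsdef]; linear_combination (-e)*h3 - b*h5 + (a+f)*h6
  have hcubic : ((a+d+f)+1)*((a+d+f)+2)*((a+d+f)-3) = 0 := by
    linear_combination 2*(cA+cD+cF) - (a+d+f)*hs2
  have ht : a+d+f = -1 := by
    rcases mul_eq_zero.1 hcubic with h' | h3'
    · rcases mul_eq_zero.1 h' with h1' | h2'
      · linarith
      · -- trace = -2, s = 1/2, contradiction with h1
        exfalso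
        have htr : a+d+f = -2 := by linarith
        rw [htr] at hs2
        have hs : s = 1/2 := by norm_num at hs2; linarith
        rw [hs, htr] at cA
        rw [hs] at cB cC
        have ha' : a = -(2/3) := by linarith
        have hb' : b = 0 := by linarith
        have hc' : c = 0 := by linarith
        rw [ha', hb', hc'] at h1; norm_num at h1
    · -- trace = 3, M = 1, contradiction with hne
      exfalso
      have htr : a+d+f = 3 := by linarith
      rw [htr] at hs2 cA cD cF
      have hs : s = 3 := by norm_num at hs2; linarith
      rw [hs] at cA cD cF cB cC cE
      exact hne ⟨by linarith, by linarith, by linarith, by linarith, by linarith, by linarith⟩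
  -- one of 1+a, 1+d, 1+f is positive
  have hgeA : 0 ≤ 1+a := by linarith [sq_nonneg (a+1), sq_nonneg b, sq_nonneg c]
  have hgeD : 0 ≤ 1+d := by linarith [sq_nonneg (d+1), sq_nonneg b, sq_nonneg e]
  have hgeF : 0 ≤ 1+f := by linarith [sq_nonneg (f+1), sq_nonneg c, sq_nonneg e]
  by_cases hA : 0 < 1 + a
  · exact so3_case0 a b c d e f h1 h2 h3 h4 h5 h6 ht hA
  by_cases hD : 0 < 1 + d
  · obtain ⟨x', y', z', hu, hd', hb', he', ha', hc', hf'⟩ :=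
      so3_case0 d b e a c f (by linarith) (by linarith) (by linarith) (by linear_combination h4) (by linear_combination h6) (by linear_combination h5) (by linarith) hD
    exact ⟨y', x', z', by linarith, by linarith [ha'], by linarith [hb'], by linear_combination hc', by linarith [hd'], by linear_combination he', by linarith [hf']⟩
  by_cases hF : 0 < 1 + f
  · obtain ⟨x', y', z', hu, hf', he', hc', hd', hb', ha'⟩ :=
      so3_case0 f e c d b a (by linarith) (by linarith) (by linarith) (by linear_combination h6) (by linear_combination h5) (by linear_combination h4) (by linarith) hF
    exact ⟨z', y', x', by linarith, by linarith [ha'], by linear_combination hb', by linear_combination hc', by linarith [hd'], by linear_combination he', by linarith [hf']⟩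
  · exfalso; linarith


open Matrix

/-- A nonidentity element of `SO(3)` is an involution iff it lies in the parametrized
family `Ω(A,B)` with `Re A = 0`, i.e. the stratum `K^{sym}` of the cut locus. -/
theorem so3_involution_iff (M : Matrix (Fin 3) (Fin 3) ℝ)
    (horth : Mᵀ * M = 1) (hdet : M.det = 1) (hne : M ≠ 1) :
    M ^ 2 = 1 ↔
      ∃ a₂ b₁ b₂ : ℝ, a₂^2 + b₁^2 + b₂^2 = 1 ∧
        M = !![a₂^2 - b₁^2 - b₂^2, 2*a₂*b₁, 2*a₂*b₂;
               2*a₂*b₁, -a₂^2 + b₁^2 - b₂^2, 2*b₁*b₂;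
               2*a₂*b₂, 2*b₂*b₁, -a₂^2 - b₁^2 + b₂^2] := by
  constructor
  · intro hM2
    have hMM : M * M = 1 := by rw [← pow_two]; exact hM2
    have hsym : Mᵀ = M := by
      have h : Mᵀ = Mᵀ * (M * M) := by rw [hMM, mul_one]
      rw [h, ← mul_assoc, horth, one_mul]
    have hs01 : M 1 0 = M 0 1 := by
      have := congrFun (congrFun hsym 0) 1; simpa using this
    have hs02 : M 2 0 = M 0 2 := by
      have := congrFun (congrFun hsym 0) 2; simpa using this
    have hs12 : M 2 1 = M 1 2 := by
      have := congrFun (congrFun hsym 1) 2; simpa using this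
    have e00 := congrFun (congrFun hMM 0) 0
    have e01 := congrFun (congrFun hMM 0) 1
    have e02 := congrFun (congrFun hMM 0) 2
    have e11 := congrFun (congrFun hMM 1) 1
    have e12 := congrFun (congrFun hMM 1) 2
    have e22 := congrFun (congrFun hMM 2) 2
    simp [Matrix.mul_apply, Fin.sum_univ_three, Matrix.one_apply] at e00 e01 e02 e11 e12 e22
    rw [Matrix.det_fin_three] at hdet
    try simp only [hs01, hs02, hs12] at e00
    try simp only [hs01, hs02, hs12] at e01
    try simp only [hs01, hs02, hs12] at e02
    try simp only [hs01, hs02, hs12] at e11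
    try simp only [hs01, hs02, hs12] at e12
    try simp only [hs01, hs02, hs12] at e22
    try simp only [hs01, hs02, hs12] at hdet
    have hneS : ¬(M 0 0 = 1 ∧ M 0 1 = 0 ∧ M 0 2 = 0 ∧ M 1 1 = 1 ∧ M 1 2 = 0 ∧ M 2 2 = 1) := by
      rintro ⟨ha, hb, hc, hd, he, hf⟩
      apply hne
      have h10 : M 1 0 = 0 := by rw [hs01, hb]
      have h20 : M 2 0 = 0 := by rw [hs02, hc]
      have h21 : M 2 1 = 0 := by rw [hs12, he]
      rw [Matrix.eta_fin_three M, ha, hb, hc, h10, hd, he, h20, h21, hf, Matrix.one_fin_three]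
    obtain ⟨x, y, z, hu, ha, hb, hc, hd, he, hf⟩ :=
      so3_scalar (M 0 0) (M 0 1) (M 0 2) (M 1 1) (M 1 2) (M 2 2)
        (by linear_combination e00) (by linear_combination e11) (by linear_combination e22)
        (by linear_combination e01) (by linear_combination e02) (by linear_combination e12)
        (by linear_combination hdet) hneS
    refine ⟨x, y, z, hu, ?_⟩
    have h10 : M 1 0 = 2*x*y := by rw [hs01, hb]
    have h20 : M 2 0 = 2*x*z := by rw [hs02, hc]
    have h21 : M 2 1 = 2*z*y := by rw [hs12, he]; ring
    rw [Matrix.eta_fin_three M, ha, hb, hc, h10, hd, he, h20, h21, hf]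
  · rintro ⟨x, y, z, hu, rfl⟩
    rw [pow_two]
    ext i j
    fin_cases i <;> fin_cases j <;>
      simp [Matrix.mul_apply, Fin.sum_univ_three, Matrix.one_apply] <;>
      first | linear_combination (x^2+y^2+z^2+1)*hu | ring
end
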